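/- In the quarter-disk example with entropy functional, nestedness of $(c,\mu,\nu)$ (with $k(y) < 0$, level sets meeting the positive $x_2$-axis) is equivalent to the monotone increase of the intercept function $y \mapsto -k(y)/\cos(y)$; given the ODE $\frac{4}{\pi}\left([-k(y)\tan y - k'(y)]\,L(y,k(y)) + \frac{L^2(y,k(y))}{2}\right) = \bar\nu(y)$, this monotonicity is equivalent to the pointwise inequality $\frac{2}{\pi} L^2(y,k(y)) \leq \bar\nu(y)$ for all $y$. -/
import Mathlib

open Set Real

noncomputable section

/-- Length of the mass-splitting level segment in the quarter-disk example. -/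
def LQD (y k : ℝ) : ℝ := Real.sqrt (1 - k ^ 2) + k * Real.tan y

lemma deriv_nonneg_of_monotoneOn {f : ℝ → ℝ} {s : Set ℝ} (hs : IsOpen s) {y d : ℝ}
    (hy : y ∈ s) (hm : MonotoneOn f s) (hd : HasDerivAt f d y) : 0 ≤ d := by
  have h := hasDerivAt_iff_tendsto_slope.1 hd
  refine ge_of_tendsto h ?_
  filter_upwards [self_mem_nhdsWithin, mem_nhdsWithin_of_mem_nhds (hs.mem_nhds hy)] with z hz hzs
  rw [slope_def_field]
  rcases lt_or_gt_of_ne (hz : z ≠ y) with h1 | h1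
  · exact div_nonneg_iff.2 (Or.inr ⟨by simpa using hm hzs hy h1.le, by linarith⟩)
  · exact div_nonneg (by simpa using hm hy hzs h1.le) (by linarith)

theorem stmt18 (k : ℝ → ℝ) (barν : ℝ → ℝ)
    (hkC1 : ∀ y ∈ Ioo 0 (Real.pi / 2), DifferentiableAt ℝ k y)
    (hkneg : ∀ y ∈ Ioo 0 (Real.pi / 2), k y < 0)
    (hLpos : ∀ y ∈ Ioo 0 (Real.pi / 2), 0 < LQD y (k y))
    -- the ODE satisfied by the mass-splitting level `k(y)`
    (hODE : ∀ y ∈ Ioo 0 (Real.pi / 2),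
      4 / Real.pi * ((-(k y) * Real.tan y - deriv k y) * LQD y (k y)
        + (LQD y (k y)) ^ 2 / 2) = barν y) :
    MonotoneOn (fun y => -(k y) / Real.cos y) (Ioo 0 (Real.pi / 2)) ↔
      ∀ y ∈ Ioo 0 (Real.pi / 2), 2 / Real.pi * (LQD y (k y)) ^ 2 ≤ barν y := by
  have hpi : (0:ℝ) < Real.pi := Real.pi_pos
  have hcos : ∀ y ∈ Ioo 0 (Real.pi / 2), 0 < Real.cos y := fun y hy =>
    Real.cos_pos_of_mem_Ioo ⟨by linarith [hy.1, hpi], hy.2⟩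
  -- derivative of the intercept function
  have hDeriv : ∀ y ∈ Ioo 0 (Real.pi / 2),
      HasDerivAt (fun y => -(k y) / Real.cos y)
        ((-(k y) * Real.tan y - deriv k y) / Real.cos y) y := by
    intro y hy
    have hc := (hcos y hy).ne'
    have h1 : HasDerivAt (fun y => -(k y) / Real.cos y)
        ((-(deriv k y) * Real.cos y - (-(k y)) * (-Real.sin y)) / Real.cos y ^ 2) y :=
      ((hkC1 y hy).hasDerivAt.neg).div (Real.hasDerivAt_cos y) hc
    convert h1 using 1
    rw [Real.tan_eq_sin_div_cos]
    field_simp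
    ring
  -- the key pointwise equivalence
  have hKey : ∀ y ∈ Ioo 0 (Real.pi / 2),
      (0 ≤ (-(k y) * Real.tan y - deriv k y) / Real.cos y ↔
        2 / Real.pi * (LQD y (k y)) ^ 2 ≤ barν y) := by
    intro y hy
    have hc := hcos y hy
    have hL := hLpos y hy
    have hODEy := hODE y hy
    have heq : 4 * ((-(k y) * Real.tan y - deriv k y) * LQD y (k y)) + 2 * (LQD y (k y)) ^ 2
        = Real.pi * barν y := by
      field_simp at hODEy
      linarith
    have hiff : 2 / Real.pi * (LQD y (k y)) ^ 2 ≤ barν y ↔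
        2 * (LQD y (k y)) ^ 2 ≤ Real.pi * barν y := by
      rw [div_mul_eq_mul_div, div_le_iff₀ hpi]
      constructor <;> intro <;> linarith
    rw [hiff, div_nonneg_iff]
    constructor
    · rintro (⟨h1, _⟩ | ⟨_, h2⟩)
      · nlinarith [mul_nonneg h1 hL.le]
      · linarith
    · intro h
      left
      refine ⟨?_, hc.le⟩
      nlinarith [hL]
  constructor
  · intro hmono y hy
    have := deriv_nonneg_of_monotoneOn isOpen_Ioo hy hmono (hDeriv y hy)
    exact (hKey y hy).1 this
  · intro h
    refine monotoneOn_of_deriv_nonneg (convex_Ioo _ _) ?_ ?_ ?_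
    · intro y hy
      exact ((hDeriv y hy).differentiableAt.continuousAt).continuousWithinAt
    · intro y hy
      rw [interior_Ioo] at hy
      exact ((hDeriv y hy).differentiableAt).differentiableWithinAt
    · intro y hy
      rw [interior_Ioo] at hy
      rw [(hDeriv y hy).deriv]
      exact (hKey y hy).2 (h y hy)

end
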